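/- If X is a regular topological space and x ∈ X, then σ_x = {F ∈ RC(X) | x ∈ F} is a cluster in the contact algebra (RC(X), ρ_X). -/
import Mathlib


open Set

/-- A set is regular closed if it equals the closure of its interior. -/
def IsRegularClosed {X : Type*} [TopologicalSpace X] (F : Set X) : Prop :=
  closure (interior F) = F

/-- A cluster in the standard contact algebra (RC(X), ρ_X), expressed via
regular closed subsets of X: (K1)-(K3) plus nonemptiness. -/
def IsRCCluster (X : Type*) [TopologicalSpace X] (σ : Set (Set X)) : Prop :=
  (∀ F ∈ σ, IsRegularClosed F) ∧
  σ.Nonempty ∧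
  (∀ F ∈ σ, ∀ G ∈ σ, (F ∩ G).Nonempty) ∧
  (∀ F G : Set X, IsRegularClosed F → IsRegularClosed G →
    F ∪ G ∈ σ → F ∈ σ ∨ G ∈ σ) ∧
  (∀ F : Set X, IsRegularClosed F → (∀ G ∈ σ, (F ∩ G).Nonempty) → F ∈ σ)

lemma closure_open_regularClosed {X : Type*} [TopologicalSpace X] (U : Set X)
    (hU : IsOpen U) : IsRegularClosed (closure U) := by
  unfold IsRegularClosed
  apply subset_antisymm
  · exact closure_minimal interior_subset isClosed_closure
  · exact closure_mono (hU.subset_interior_iff.mpr subset_closure)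

/-- In a regular space, σ_x = {F ∈ RC(X) | x ∈ F} is a cluster of the
standard contact algebra. -/
theorem sigma_x_isCluster (X : Type*) [TopologicalSpace X] [RegularSpace X]
    (x : X) :
    IsRCCluster X {F : Set X | IsRegularClosed F ∧ x ∈ F} := by
  refine ⟨fun F hF => hF.1, ⟨univ, ?_, mem_univ x⟩, ?_, ?_, ?_⟩
  · unfold IsRegularClosed; simp
  · rintro F ⟨-, hxF⟩ G ⟨-, hxG⟩
    exact ⟨x, hxF, hxG⟩
  · rintro F G hF hG ⟨-, hx⟩
    rcases hx with h | h
    · exact Or.inl ⟨hF, h⟩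
    · exact Or.inr ⟨hG, h⟩
  · intro F hF hmeet
    refine ⟨hF, ?_⟩
    by_contra hxF
    have hFc : IsClosed F := hF ▸ isClosed_closure
    have hnhds : Fᶜ ∈ nhds x := hFc.isOpen_compl.mem_nhds hxF
    obtain ⟨C, ⟨hCmem, hCclosed⟩, hCsub⟩ := (closed_nhds_basis x).mem_iff.mp hnhds
    set G := closure (interior C) with hGdef
    have hGσ : G ∈ {F : Set X | IsRegularClosed F ∧ x ∈ F} :=
      ⟨closure_open_regularClosed _ isOpen_interior,
       subset_closure (mem_interior_iff_mem_nhds.mpr hCmem)⟩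
    obtain ⟨y, hyF, hyG⟩ := hmeet G hGσ
    have : y ∈ Fᶜ := hCsub (hCclosed.closure_subset_iff.mpr interior_subset hyG)
    exact this hyF
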